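/- Let V be a pointwise finite dimensional zigzag module, and assume V is interval decomposable (as holds for every p.f.d. zigzag module by the structure theorem for zigzag modules). Then E(V) is block decomposable, and there is a bijective matching between the barcode B(V) and the barcode B(E(V)) which matches each zigzag interval ⟨b,d⟩_ZZ to the block ⟨b,d⟩_BL of the same endpoint type. -/

import Mathlib

open scoped DirectSum ENNReal

namespace PersStab

/-- A persistence module indexed by a preordered set `P`, with values in
`K`-vector spaces. -/
structure PersMod (K : Type) [Field K] (P : Type) [Preorder P] where
  V : P → Type
  [acg : ∀ a, AddCommGroup (V a)]
  [mod : ∀ a, Module K (V a)]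
  map : ∀ {a b : P}, a ≤ b → (V a →ₗ[K] V b)
  map_id : ∀ a : P, map (le_refl a) = LinearMap.id
  map_comp : ∀ {a b c : P} (h₁ : a ≤ b) (h₂ : b ≤ c),
    map (h₁.trans h₂) = (map h₂).comp (map h₁)

attribute [instance] PersMod.acg PersMod.mod

variable {K : Type} [Field K] {P : Type} [Preorder P]

/-- Pointwise finite dimensional. -/
def PersMod.pfd (M : PersMod K P) : Prop := ∀ a, FiniteDimensional K (M.V a)

/-- A morphism of persistence modules (a natural transformation). -/
structure PersHom (M N : PersMod K P) where
  app : ∀ a, M.V a →ₗ[K] N.V a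
  natural : ∀ {a b : P} (h : a ≤ b), (app b).comp (M.map h) = (N.map h).comp (app a)

/-- An isomorphism of persistence modules. -/
structure PersIso (M N : PersMod K P) where
  e : ∀ a, M.V a ≃ₗ[K] N.V a
  natural : ∀ {a b : P} (h : a ≤ b) (m : M.V a), e b (M.map h m) = N.map h (e a m)

/-- Convexity: the second defining property of an interval in a poset. -/
def IsConvexIn (J : Set P) : Prop :=
  ∀ ⦃a b c : P⦄, a ∈ J → c ∈ J → a ≤ b → b ≤ c → b ∈ J

/-- Connectivity: the third defining property of an interval in a poset:
any two points are joined by a finite zigzag of comparable points inside `J`. -/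
def IsConnectedIn (J : Set P) : Prop :=
  ∀ a ∈ J, ∀ c ∈ J, ∃ (n : ℕ) (f : Fin (n + 1) → P),
    f 0 = a ∧ f (Fin.last n) = c ∧ (∀ k, f k ∈ J) ∧
    ∀ k : Fin n, f k.castSucc ≤ f k.succ ∨ f k.succ ≤ f k.castSucc

/-- An interval in a poset: nonempty, convex and connected. -/
structure IsInterval (J : Set P) : Prop where
  nonempty : J.Nonempty
  convex : IsConvexIn J
  connected : IsConnectedIn J

-- The structure map of an interval module: the identity `K → K` if the source
-- lies in the interval, and `0` otherwise.
open Classical in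
noncomputable def ivMap (K : Type) [Field K] (J : Set P) (a c : P) :
    (PLift (a ∈ J) → K) →ₗ[K] (PLift (c ∈ J) → K) where
  toFun v _ := if h : a ∈ J then v ⟨h⟩ else 0
  map_add' u v := by
    funext hc
    by_cases h : a ∈ J <;> simp [h]
  map_smul' r v := by
    funext hc
    by_cases h : a ∈ J <;> simp [h]

/-- The interval module `I^J` of a convex set `J`: one-dimensional (a copy of `K`)
at points of `J`, zero elsewhere, with identity internal maps inside `J`. -/
noncomputable def intervalModule (K : Type) [Field K] (J : Set P) (hJ : IsConvexIn J) :
    PersMod K P where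
  V a := PLift (a ∈ J) → K
  map {a c} _ := ivMap K J a c
  map_id a := by
    refine LinearMap.ext fun v => funext fun hc => ?_
    obtain ⟨hc⟩ := hc
    simp only [ivMap, LinearMap.coe_mk, AddHom.coe_mk, LinearMap.id_coe, id_eq]
    rw [dif_pos hc]
  map_comp {a b c} h₁ h₂ := by
    refine LinearMap.ext fun v => funext fun hc => ?_
    simp only [ivMap, LinearMap.coe_mk, AddHom.coe_mk, LinearMap.coe_comp,
      Function.comp_apply]
    by_cases ha : a ∈ J
    · have hb : b ∈ J := hJ ha hc.down h₁ h₂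
      simp [ha, hb]
    · simp [ha]

/-- A decomposition of the persistence module `M` as a direct sum of interval
modules `I^{B i}`, `i : ι`, where all the sets `B i` satisfy the predicate `pred`.
The multiset `{B i | i : ι}` is the barcode of `M`. -/
structure DecompOver (pred : Set P → Prop) (M : PersMod K P) where
  ι : Type
  B : ι → Set P
  mem : ∀ i, pred (B i)
  equiv : ∀ a : P, M.V a ≃ₗ[K] (Π₀ i : ι, (PLift (a ∈ B i) → K))
  natural : ∀ {a c : P} (h : a ≤ c) (m : M.V a),
    equiv c (M.map h m) =
      DFinsupp.mapRange.linearMap (fun i => ivMap K (B i) a c) (equiv a m)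

/-- A matching between two multisets, presented as indexed families: a bijection
between a subset (the coimage) of the index set `ι` and a subset (the image) of
the index set `κ`. -/
structure Matching (ι κ : Type) : Type where
  R : ι → κ → Prop
  functional : ∀ {i j j'}, R i j → R i j' → j = j'
  injective : ∀ {i i' j}, R i j → R i' j → i = i'

section Shift

variable (sh : ℝ → P → P)

/-- `M` is `δ`-trivial (with respect to the shift `sh`): all internal maps
from `p` to the `δ`-shift of `p` vanish. -/
def ETrivial (M : PersMod K P) (δ : ℝ) : Prop :=
  ∀ (p : P) (h : p ≤ sh δ p), M.map h = 0

/-- The data `(f, g)` is an `ε`-interleaving between `M` and `N`: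
`f : M → N(ε)` and `g : N → M(ε)` are natural, and the two composites agree with
the `2ε`-shift morphisms of `M` and `N`. -/
structure IsInterleaving (ε : ℝ) (M N : PersMod K P)
    (f : ∀ p, M.V p →ₗ[K] N.V (sh ε p)) (g : ∀ p, N.V p →ₗ[K] M.V (sh ε p)) : Prop where
  nat_f : ∀ {p q : P} (h : p ≤ q) (h' : sh ε p ≤ sh ε q),
    (f q).comp (M.map h) = (N.map h').comp (f p)
  nat_g : ∀ {p q : P} (h : p ≤ q) (h' : sh ε p ≤ sh ε q),
    (g q).comp (N.map h) = (M.map h').comp (g p)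
  gf : ∀ (p : P) (h : p ≤ sh ε (sh ε p)), (g (sh ε p)).comp (f p) = M.map h
  fg : ∀ (p : P) (h : p ≤ sh ε (sh ε p)), (f (sh ε p)).comp (g p) = N.map h

/-- `M` and `N` are `ε`-interleaved. -/
def Interleaved (ε : ℝ) (M N : PersMod K P) : Prop :=
  0 ≤ ε ∧ ∃ f g, IsInterleaving sh ε M N f g

/-- The interleaving distance, valued in `ℝ≥0∞`. -/
noncomputable def dI (M N : PersMod K P) : ℝ≥0∞ :=
  ⨅ ε : {e : ℝ // Interleaved sh e M N}, ENNReal.ofReal ε.1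

/-- `σ` is an `ε`-matching between the barcodes `{A i}` and `{C j}`:
every interval of either barcode which is not `2ε`-trivial is matched, and
matched intervals have `ε`-interleaved interval modules. -/
def IsEpsMatching (K : Type) [Field K] (ε : ℝ) {ι κ : Type}
    (A : ι → Set P) (hA : ∀ i, IsConvexIn (A i))
    (C : κ → Set P) (hC : ∀ j, IsConvexIn (C j)) (σ : Matching ι κ) : Prop :=
  (∀ i, ¬ ETrivial sh (intervalModule K (A i) (hA i)) (2 * ε) → ∃ j, σ.R i j) ∧
  (∀ j, ¬ ETrivial sh (intervalModule K (C j) (hC j)) (2 * ε) → ∃ i, σ.R i j) ∧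
  (∀ i j, σ.R i j →
    Interleaved sh ε (intervalModule K (A i) (hA i)) (intervalModule K (C j) (hC j)))

/-- The bottleneck distance between two barcodes, valued in `ℝ≥0∞`. -/
noncomputable def dB (K : Type) [Field K] {ι κ : Type}
    (A : ι → Set P) (hA : ∀ i, IsConvexIn (A i))
    (C : κ → Set P) (hC : ∀ j, IsConvexIn (C j)) : ℝ≥0∞ :=
  ⨅ e : {e : ℝ // 0 ≤ e ∧ ∃ σ : Matching ι κ, IsEpsMatching sh K e A hA C hC σ},
    ENNReal.ofReal e.1

end Shift

end PersStab
namespace PersStab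

/-! ### The poset `ℝᵒᵖ × ℝ` and blocks -/

/-- The poset `ℝᵒᵖ × ℝ`: `(a, b) ≤ (c, d)` iff `c ≤ a` and `b ≤ d`. -/
structure RopR where
  x : ℝ
  y : ℝ

instance : Preorder RopR where
  le p q := q.x ≤ p.x ∧ p.y ≤ q.y
  le_refl p := ⟨le_rfl, le_rfl⟩
  le_trans p q r h₁ h₂ := ⟨h₂.1.trans h₁.1, h₁.2.trans h₂.2⟩

lemma RopR.le_def {p q : RopR} : p ≤ q ↔ q.x ≤ p.x ∧ p.y ≤ q.y := Iff.rfl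

/-- The `ε`-shift on the poset `ℝᵒᵖ × ℝ`: `(a, b) ↦ (a - ε, b + ε)`. -/
def shf (ε : ℝ) (p : RopR) : RopR := ⟨p.x - ε, p.y + ε⟩

/-- The block `(a,b)_BL = {(x,y) ∈ U : a < x, y < b}` (with `a`, `b` finite;
for infinite endpoints this shape is of type co, oc or c). -/
def blkO (a b : ℝ) : Set RopR := {p | p.x ≤ p.y ∧ a < p.x ∧ p.y < b}

/-- The blocks `[a,b)_BL = {(x,y) ∈ U : a ≤ y < b}` (for `s = a` finite) and
`(-∞,b)_BL = {(x,y) ∈ U : y < b}` (for `s = ⊥`). -/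
def blkCO (s : EReal) (b : ℝ) : Set RopR := {p | p.x ≤ p.y ∧ s ≤ (p.y : EReal) ∧ p.y < b}

/-- The blocks `(a,b]_BL = {(x,y) ∈ U : a < x ≤ b}` (for `t = b` finite) and
`(a,∞)_BL = {(x,y) ∈ U : a < x}` (for `t = ⊤`). -/
def blkOC (a : ℝ) (t : EReal) : Set RopR := {p | p.x ≤ p.y ∧ a < p.x ∧ (p.x : EReal) ≤ t}

/-- The closed blocks `{(x,y) ∈ U : x ≤ t, s ≤ y}`: this includes `[a,b]_BL`
(`s = a ≤ t = b` finite), `[b,a]_BL` (`t = a < s = b` finite), `[a,∞)_BL` (`t = ⊤`),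
`(-∞,b]_BL` (`s = ⊥`) and `(-∞,∞)_BL = U`. -/
def blkC (s t : EReal) : Set RopR := {p | p.x ≤ p.y ∧ (p.x : EReal) ≤ t ∧ s ≤ (p.y : EReal)}

/-- The four types of blocks. -/
inductive BlockType : Type
  | o | co | oc | c
deriving DecidableEq

/-- The blocks of each type. -/
def IsBlockOfType : BlockType → Set RopR → Prop
  | .o, J => ∃ a b : ℝ, a < b ∧ J = blkO a b
  | .co, J => ∃ (s : EReal) (b : ℝ), s ≠ ⊤ ∧ s < (b : EReal) ∧ J = blkCO s b
  | .oc, J => ∃ (a : ℝ) (t : EReal), t ≠ ⊥ ∧ (a : EReal) < t ∧ J = blkOC a t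
  | .c, J => ∃ s t : EReal, s ≠ ⊤ ∧ t ≠ ⊥ ∧ J = blkC s t

/-- A block: an interval of `U ⊆ ℝᵒᵖ × ℝ` of one of the five standard shapes. -/
def IsBlock (J : Set RopR) : Prop := ∃ τ, IsBlockOfType τ J

lemma blkO_convex (a b : ℝ) : IsConvexIn (blkO a b) := by
  rintro p q r ⟨hp1, hp2, hp3⟩ ⟨hr1, hr2, hr3⟩ ⟨hpq1, hpq2⟩ ⟨hqr1, hqr2⟩
  exact ⟨by linarith, by linarith, by linarith⟩

lemma blkCO_convex (s : EReal) (b : ℝ) : IsConvexIn (blkCO s b) := by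
  rintro p q r ⟨hp1, hp2, hp3⟩ ⟨hr1, hr2, hr3⟩ ⟨hpq1, hpq2⟩ ⟨hqr1, hqr2⟩
  refine ⟨by linarith, hp2.trans ?_, by linarith⟩
  exact_mod_cast hpq2

lemma blkOC_convex (a : ℝ) (t : EReal) : IsConvexIn (blkOC a t) := by
  rintro p q r ⟨hp1, hp2, hp3⟩ ⟨hr1, hr2, hr3⟩ ⟨hpq1, hpq2⟩ ⟨hqr1, hqr2⟩
  refine ⟨by linarith, by linarith, le_trans ?_ hp3⟩
  exact_mod_cast hpq1

lemma blkC_convex (s t : EReal) : IsConvexIn (blkC s t) := by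
  rintro p q r ⟨hp1, hp2, hp3⟩ ⟨hr1, hr2, hr3⟩ ⟨hpq1, hpq2⟩ ⟨hqr1, hqr2⟩
  refine ⟨by linarith, le_trans ?_ hp2, hp3.trans ?_⟩
  · exact_mod_cast hpq1
  · exact_mod_cast hpq2

lemma IsBlockOfType.convex {τ : BlockType} {J : Set RopR} (h : IsBlockOfType τ J) :
    IsConvexIn J := by
  cases τ with
  | o => obtain ⟨a, b, -, rfl⟩ := h; exact blkO_convex a b
  | co => obtain ⟨s, b, -, -, rfl⟩ := h; exact blkCO_convex s b
  | oc => obtain ⟨a, t, -, -, rfl⟩ := h; exact blkOC_convex a t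
  | c => obtain ⟨s, t, -, -, rfl⟩ := h; exact blkC_convex s t

lemma IsBlock.convex {J : Set RopR} (h : IsBlock J) : IsConvexIn J :=
  h.choose_spec.convex

end PersStab
namespace PersStab

/-! ### The zigzag poset `ZZ ⊆ ℤᵒᵖ × ℤ` and the poset `U ⊆ ℝᵒᵖ × ℝ` -/

/-- The zigzag poset `ZZ = {(i,j) : i ∈ ℤ, j ∈ {i, i-1}} ⊆ ℤᵒᵖ × ℤ`. -/
structure ZZpt where
  i : ℤ
  j : ℤ
  hij : j = i ∨ j = i - 1

instance : Preorder ZZpt where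
  le p q := q.i ≤ p.i ∧ p.j ≤ q.j
  le_refl p := ⟨le_rfl, le_rfl⟩
  le_trans p q r h₁ h₂ := ⟨h₂.1.trans h₁.1, h₁.2.trans h₂.2⟩

lemma ZZpt.le_def {p q : ZZpt} : p ≤ q ↔ q.i ≤ p.i ∧ p.j ≤ q.j := Iff.rfl

lemma ZZpt.j_le_i (p : ZZpt) : p.j ≤ p.i := by
  rcases p.hij with h | h <;> omega

/-- The first coordinate of a zigzag point, as an extended real. -/
def pI (p : ZZpt) : EReal := ((p.i : ℝ) : EReal)
/-- The second coordinate of a zigzag point, as an extended real. -/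
def pJ (p : ZZpt) : EReal := ((p.j : ℝ) : EReal)

lemma pJ_le_pI (p : ZZpt) : pJ p ≤ pI p := by
  unfold pI pJ
  exact_mod_cast p.j_le_i

lemma pI_mono {p q : ZZpt} (h : q.i ≤ p.i) : pI q ≤ pI p := by
  unfold pI; exact_mod_cast h

lemma pJ_mono {p q : ZZpt} (h : p.j ≤ q.j) : pJ p ≤ pJ q := by
  unfold pJ; exact_mod_cast h

/-- `(β,β) ≤ (i,j)` in the product order (with extended-real endpoints). -/
def zzLeLo (β : EReal) (p : ZZpt) : Prop := β ≤ pI p ∧ β ≤ pJ p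
/-- `(β,β) < (i,j)` in the product order. -/
def zzLtLo (β : EReal) (p : ZZpt) : Prop := zzLeLo β p ∧ ¬(pI p ≤ β ∧ pJ p ≤ β)
/-- `(i,j) ≤ (δ,δ)` in the product order. -/
def zzLeHi (p : ZZpt) (δ : EReal) : Prop := pI p ≤ δ ∧ pJ p ≤ δ
/-- `(i,j) < (δ,δ)` in the product order. -/
def zzLtHi (p : ZZpt) (δ : EReal) : Prop := zzLeHi p δ ∧ ¬(δ ≤ pI p ∧ δ ≤ pJ p)

/-- The zigzag interval `(β,δ)_ZZ`. -/
def zzO (β δ : EReal) : Set ZZpt := {p | zzLtLo β p ∧ zzLtHi p δ}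
/-- The zigzag interval `[β,δ)_ZZ`. -/
def zzCO (β δ : EReal) : Set ZZpt := {p | zzLeLo β p ∧ zzLtHi p δ}
/-- The zigzag interval `(β,δ]_ZZ`. -/
def zzOC (β δ : EReal) : Set ZZpt := {p | zzLtLo β p ∧ zzLeHi p δ}
/-- The zigzag interval `[β,δ]_ZZ`. -/
def zzCC (β δ : EReal) : Set ZZpt := {p | zzLeLo β p ∧ zzLeHi p δ}

lemma zzLeLo_iff (β : EReal) (p : ZZpt) : zzLeLo β p ↔ β ≤ pJ p :=
  ⟨fun h => h.2, fun h => ⟨h.trans (pJ_le_pI p), h⟩⟩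

lemma zzLtLo_iff (β : EReal) (p : ZZpt) : zzLtLo β p ↔ β ≤ pJ p ∧ β < pI p := by
  constructor
  · rintro ⟨⟨h1, h2⟩, h3⟩
    refine ⟨h2, not_le.1 fun h => h3 ⟨h, (pJ_le_pI p).trans h⟩⟩
  · rintro ⟨h1, h2⟩
    exact ⟨⟨h2.le, h1⟩, fun h => absurd h.1 (not_le.2 h2)⟩

lemma zzLeHi_iff (p : ZZpt) (δ : EReal) : zzLeHi p δ ↔ pI p ≤ δ :=
  ⟨fun h => h.1, fun h => ⟨h, (pJ_le_pI p).trans h⟩⟩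

lemma zzLtHi_iff (p : ZZpt) (δ : EReal) : zzLtHi p δ ↔ pI p ≤ δ ∧ pJ p < δ := by
  constructor
  · rintro ⟨⟨h1, h2⟩, h3⟩
    refine ⟨h1, not_le.1 fun h => h3 ⟨(h.trans (pJ_le_pI p) : δ ≤ pI p), h⟩⟩
  · rintro ⟨h1, h2⟩
    exact ⟨⟨h1, h2.le⟩, fun h => absurd h.2 (not_le.2 h2)⟩

lemma zzO_convex (β δ : EReal) : IsConvexIn (zzO β δ) := by
  rintro p q r ⟨hp1, hp2⟩ ⟨hr1, hr2⟩ hpq hqr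
  rw [zzLtLo_iff] at hp1 hr1
  rw [zzLtHi_iff] at hp2 hr2
  exact ⟨(zzLtLo_iff β q).2 ⟨hp1.1.trans (pJ_mono hpq.2),
      lt_of_lt_of_le hr1.2 (pI_mono hqr.1)⟩,
    (zzLtHi_iff q δ).2 ⟨(pI_mono hpq.1).trans hp2.1,
      lt_of_le_of_lt (pJ_mono hqr.2) hr2.2⟩⟩

lemma zzCO_convex (β δ : EReal) : IsConvexIn (zzCO β δ) := by
  rintro p q r ⟨hp1, hp2⟩ ⟨hr1, hr2⟩ hpq hqr
  rw [zzLeLo_iff] at hp1 hr1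
  rw [zzLtHi_iff] at hp2 hr2
  exact ⟨(zzLeLo_iff β q).2 (hp1.trans (pJ_mono hpq.2)),
    (zzLtHi_iff q δ).2 ⟨(pI_mono hpq.1).trans hp2.1,
      lt_of_le_of_lt (pJ_mono hqr.2) hr2.2⟩⟩

lemma zzOC_convex (β δ : EReal) : IsConvexIn (zzOC β δ) := by
  rintro p q r ⟨hp1, hp2⟩ ⟨hr1, hr2⟩ hpq hqr
  rw [zzLtLo_iff] at hp1 hr1
  rw [zzLeHi_iff] at hp2 hr2
  exact ⟨(zzLtLo_iff β q).2 ⟨hp1.1.trans (pJ_mono hpq.2),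
      lt_of_lt_of_le hr1.2 (pI_mono hqr.1)⟩,
    (zzLeHi_iff q δ).2 ((pI_mono hpq.1).trans hp2)⟩

lemma zzCC_convex (β δ : EReal) : IsConvexIn (zzCC β δ) := by
  rintro p q r ⟨hp1, hp2⟩ ⟨hr1, hr2⟩ hpq hqr
  rw [zzLeLo_iff] at hp1 hr1
  rw [zzLeHi_iff] at hp2 hr2
  exact ⟨(zzLeLo_iff β q).2 (hp1.trans (pJ_mono hpq.2)),
    (zzLeHi_iff q δ).2 ((pI_mono hpq.1).trans hp2)⟩

/-- The poset `U ⊆ ℝᵒᵖ × ℝ` of pairs `(x, y)` with `x ≤ y`. -/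
abbrev UPos := {p : RopR // p.x ≤ p.y}

lemma UPos.le_def {u v : UPos} : u ≤ v ↔ v.1.x ≤ u.1.x ∧ u.1.y ≤ v.1.y := Iff.rfl

/-- The block `(β,δ)_BL` of `U` (extended-real endpoints). -/
def ublkO (β δ : EReal) : Set UPos := {u | β < (u.1.x : EReal) ∧ ((u.1.y : EReal)) < δ}
/-- The block `[β,δ)_BL` of `U`. -/
def ublkCO (β δ : EReal) : Set UPos := {u | β ≤ (u.1.y : EReal) ∧ ((u.1.y : EReal)) < δ}
/-- The block `(β,δ]_BL` of `U`. -/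
def ublkOC (β δ : EReal) : Set UPos := {u | β < (u.1.x : EReal) ∧ ((u.1.x : EReal)) ≤ δ}
/-- The block `[β,δ]_BL` of `U`. -/
def ublkCC (β δ : EReal) : Set UPos := {u | ((u.1.x : EReal)) ≤ δ ∧ β ≤ (u.1.y : EReal)}

lemma coeR_mono {s t : ℝ} (h : s ≤ t) : (s : EReal) ≤ (t : EReal) := by exact_mod_cast h

lemma ublkO_convex (β δ : EReal) : IsConvexIn (ublkO β δ) := by
  rintro p q r ⟨hp1, hp2⟩ ⟨hr1, hr2⟩ hpq hqr
  exact ⟨lt_of_lt_of_le hr1 (coeR_mono hqr.1), lt_of_le_of_lt (coeR_mono hqr.2) hr2⟩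

lemma ublkCO_convex (β δ : EReal) : IsConvexIn (ublkCO β δ) := by
  rintro p q r ⟨hp1, hp2⟩ ⟨hr1, hr2⟩ hpq hqr
  exact ⟨hp1.trans (coeR_mono hpq.2), lt_of_le_of_lt (coeR_mono hqr.2) hr2⟩

lemma ublkOC_convex (β δ : EReal) : IsConvexIn (ublkOC β δ) := by
  rintro p q r ⟨hp1, hp2⟩ ⟨hr1, hr2⟩ hpq hqr
  exact ⟨lt_of_lt_of_le hr1 (coeR_mono hqr.1), (coeR_mono hpq.1).trans hp2⟩

lemma ublkCC_convex (β δ : EReal) : IsConvexIn (ublkCC β δ) := by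
  rintro p q r ⟨hp1, hp2⟩ ⟨hr1, hr2⟩ hpq hqr
  exact ⟨(coeR_mono hpq.1).trans hp1, hp2.trans (coeR_mono hpq.2)⟩

/-! ### The block extension functor `E` -/

variable {K : Type} [Field K]

attribute [local instance] Classical.decEq

/-- The set of zigzag indices lying below `u ∈ U` in `ℝᵒᵖ × ℝ`:
`{(i,j) ∈ ZZ : u.x ≤ i and j ≤ u.y}`. -/
def ZZbelow (u : UPos) : Set ZZpt := {p | u.1.x ≤ (p.i : ℝ) ∧ (p.j : ℝ) ≤ u.1.y}

lemma ZZbelow_mono {u v : UPos} (h : u ≤ v) : ZZbelow u ⊆ ZZbelow v := by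
  rintro p ⟨h1, h2⟩
  exact ⟨le_trans h.1 h1, le_trans h2 h.2⟩

/-- The submodule of relations defining the colimit of `V` over `S`. -/
noncomputable def relSub (V : PersMod K ZZpt) (S : Set ZZpt) :
    Submodule K (⨁ p : S, V.V p.1) :=
  Submodule.span K {x | ∃ (p q : ↥S) (h : p.1 ≤ q.1) (v : V.V p.1),
    x = DirectSum.lof K ↥S (fun r => V.V r.1) p v -
      DirectSum.lof K ↥S (fun r => V.V r.1) q (V.map h v)}

/-- The map between direct sums induced by an inclusion of index sets. -/
noncomputable def fwd (V : PersMod K ZZpt) {S T : Set ZZpt} (hST : S ⊆ T) :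
    (⨁ p : S, V.V p.1) →ₗ[K] (⨁ p : T, V.V p.1) :=
  DirectSum.toModule K ↥S _
    (fun p => DirectSum.lof K ↥T (fun r => V.V r.1) ⟨p.1, hST p.2⟩)

set_option maxHeartbeats 1000000 in
lemma fwd_lof (V : PersMod K ZZpt) {S T : Set ZZpt} (hST : S ⊆ T) (p : ↥S)
    (v : V.V p.1) :
    fwd V hST (DirectSum.lof K ↥S (fun r => V.V r.1) p v) =
      DirectSum.lof K ↥T (fun r => V.V r.1) ⟨p.1, hST p.2⟩ v := by
  unfold fwd
  exact DirectSum.toModule_lof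
    (φ := fun q : ↥S => DirectSum.lof K ↥T (fun r => V.V r.1) ⟨q.1, hST q.2⟩) K p v

lemma fwd_rel (V : PersMod K ZZpt) {S T : Set ZZpt} (hST : S ⊆ T) :
    relSub V S ≤ (relSub V T).comap (fwd V hST) := by
  rw [← Submodule.map_le_iff_le_comap, relSub, Submodule.map_span]
  refine Submodule.span_le.2 ?_
  rintro x ⟨y, ⟨p, q, h, v, rfl⟩, rfl⟩
  refine Submodule.subset_span ?_
  refine ⟨⟨p.1, hST p.2⟩, ⟨q.1, hST q.2⟩, h, v, ?_⟩
  rw [map_sub, fwd_lof, fwd_lof]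

/-- The block extension functor `E` on objects: `E(V)` is the `U`-indexed module
whose value at `u` is the colimit of `V` over `{(i,j) ∈ ZZ : u.x ≤ i, j ≤ u.y}`,
computed as a quotient of a direct sum. -/
noncomputable def EMod (V : PersMod K ZZpt) : PersMod K UPos where
  V u := (⨁ p : ZZbelow u, V.V p.1) ⧸ relSub V (ZZbelow u)
  map {u v} h := Submodule.mapQ _ _ (fwd V (ZZbelow_mono h)) (fwd_rel V (ZZbelow_mono h))
  map_id u := by
    refine Submodule.linearMap_qext _ ?_
    refine DirectSum.linearMap_ext _ fun p => ?_
    obtain ⟨pv, hp⟩ := p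
    refine LinearMap.ext fun v => ?_
    simp only [LinearMap.coe_comp, Function.comp_apply, Submodule.mkQ_apply,
      Submodule.mapQ_apply, LinearMap.id_coe, id_eq]
    rw [fwd_lof]
  map_comp {u v w} h₁ h₂ := by
    refine Submodule.linearMap_qext _ ?_
    refine DirectSum.linearMap_ext _ fun p => ?_
    obtain ⟨pv, hp⟩ := p
    refine LinearMap.ext fun x => ?_
    simp only [LinearMap.coe_comp, Function.comp_apply, Submodule.mkQ_apply,
      Submodule.mapQ_apply]
    rw [fwd_lof, fwd_lof, fwd_lof]

end PersStab
namespace PersStab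

/-- Endpoints in `ℤ ∪ {±∞}`, coerced into the extended reals. -/
noncomputable def ez : WithBot (WithTop ℤ) → EReal
  | none => ⊥
  | some none => ⊤
  | some (some n) => ((n : ℝ) : EReal)

/-- Zigzag intervals: the intervals `⟨b,d⟩_ZZ` of the zigzag poset, with
endpoints in `ℤ ∪ {±∞}` as appropriate for each endpoint type. -/
def IsZZInterval (J : Set ZZpt) : Prop :=
  (∃ β δ : WithBot (WithTop ℤ), ez β < ez δ ∧ J = zzO (ez β) (ez δ)) ∨
  (∃ (b : ℤ) (δ : WithBot (WithTop ℤ)), ((b : ℝ) : EReal) < ez δ ∧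
    J = zzCO ((b : ℝ) : EReal) (ez δ)) ∨
  (∃ (β : WithBot (WithTop ℤ)) (d : ℤ), ez β < ((d : ℝ) : EReal) ∧
    J = zzOC (ez β) ((d : ℝ) : EReal)) ∨
  (∃ b d : ℤ, b ≤ d ∧ J = zzCC ((b : ℝ) : EReal) ((d : ℝ) : EReal))

/-- Blocks, as subsets of the poset `U`. -/
def IsBlockU (J : Set UPos) : Prop :=
  (∃ β δ : EReal, J = ublkO β δ) ∨ (∃ β δ : EReal, J = ublkCO β δ) ∨
  (∃ β δ : EReal, J = ublkOC β δ) ∨ (∃ β δ : EReal, J = ublkCC β δ)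

/-- A zigzag interval and a block correspond when they are of the same endpoint
type and have the same endpoints. -/
def ZZBlockCorresponds (J : Set ZZpt) (J' : Set UPos) : Prop :=
  (∃ β δ : WithBot (WithTop ℤ), ez β < ez δ ∧ J = zzO (ez β) (ez δ) ∧
    J' = ublkO (ez β) (ez δ)) ∨
  (∃ (b : ℤ) (δ : WithBot (WithTop ℤ)), ((b : ℝ) : EReal) < ez δ ∧
    J = zzCO ((b : ℝ) : EReal) (ez δ) ∧ J' = ublkCO ((b : ℝ) : EReal) (ez δ)) ∨
  (∃ (β : WithBot (WithTop ℤ)) (d : ℤ), ez β < ((d : ℝ) : EReal) ∧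
    J = zzOC (ez β) ((d : ℝ) : EReal) ∧ J' = ublkOC (ez β) ((d : ℝ) : EReal)) ∨
  (∃ b d : ℤ, b ≤ d ∧ J = zzCC ((b : ℝ) : EReal) ((d : ℝ) : EReal) ∧
    J' = ublkCC ((b : ℝ) : EReal) ((d : ℝ) : EReal))

/-! ### Auxiliary development -/

attribute [local instance] Classical.decEq

/-- Extensionality for zigzag points. -/
lemma ZZpt.ext' {p q : ZZpt} (h1 : p.i = q.i) (h2 : p.j = q.j) : p = q := by
  cases p; cases q; cases h1; cases h2; rfl

/-- Parametrization of the zigzag poset by `ℤ`. -/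
def zpt (n : ℤ) : ZZpt := ⟨(n + 1) / 2, n / 2, by omega⟩

lemma zpt_i (n : ℤ) : (zpt n).i = (n + 1) / 2 := rfl
lemma zpt_j (n : ℤ) : (zpt n).j = n / 2 := rfl

lemma zpt_add (p : ZZpt) : zpt (p.i + p.j) = p := by
  refine ZZpt.ext' ?_ ?_ <;> rcases p.hij with h | h <;> simp [zpt_i, zpt_j] <;> omega

lemma zpt_i_mono {m n : ℤ} (h : m ≤ n) : (zpt m).i ≤ (zpt n).i := by
  simp only [zpt_i]; omega

lemma zpt_j_mono {m n : ℤ} (h : m ≤ n) : (zpt m).j ≤ (zpt n).j := by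
  simp only [zpt_j]; omega

lemma zpt_comparable (n : ℤ) : zpt n ≤ zpt (n + 1) ∨ zpt (n + 1) ≤ zpt n := by
  by_cases h : (n + 1 + 1) / 2 ≤ (n + 1) / 2
  · left; exact ⟨h, zpt_j_mono (by omega)⟩
  · right
    refine ⟨?_, ?_⟩ <;> simp only [zpt_i, zpt_j] <;> omega

lemma mem_ZZbelow {u : UPos} {p : ZZpt} :
    p ∈ ZZbelow u ↔ u.1.x ≤ (p.i : ℝ) ∧ (p.j : ℝ) ≤ u.1.y := Iff.rfl

lemma ZZbelow_tconv (u : UPos) {n₁ n₂ n₃ : ℤ} (h12 : n₁ ≤ n₂) (h23 : n₂ ≤ n₃)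
    (h1 : zpt n₁ ∈ ZZbelow u) (h3 : zpt n₃ ∈ ZZbelow u) : zpt n₂ ∈ ZZbelow u :=
  ⟨le_trans h1.1 (by exact_mod_cast zpt_i_mono h12),
   le_trans (by exact_mod_cast zpt_j_mono h23 : ((zpt n₂).j : ℝ) ≤ (zpt n₃).j) h3.2⟩

/-- Abbreviation for the `EReal` coercion of an integer. -/
def ebi (n : ℤ) : EReal := ((n : ℝ) : EReal)

def IsIntOrBot (β : EReal) : Prop := β = ⊥ ∨ ∃ b : ℤ, β = ebi b
def IsIntOrTop (δ : EReal) : Prop := δ = ⊤ ∨ ∃ d : ℤ, δ = ebi d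

/-- The package of combinatorial facts relating a zigzag interval `J` to a
block `J'` which make the colimit computation work. -/
structure GoodPair (J : Set ZZpt) (J' : Set UPos) : Prop where
  l1 : ∀ u : UPos, u ∈ J' → ∃ p, p ∈ ZZbelow u ∧ p ∈ J
  l2 : ∀ u : UPos, u ∈ J' → ∀ p q : ZZpt, p ∈ ZZbelow u → q ∈ ZZbelow u → p ≤ q →
        p ∈ J → q ∈ J
  l3 : ∀ u : UPos, u ∉ J' → ∀ p, p ∈ ZZbelow u → p ∈ J →
        ∃ r r' : ZZpt, r ∈ ZZbelow u ∧ r ∈ J ∧ r' ∈ ZZbelow u ∧ r' ∉ J ∧ r ≤ r'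
  l5 : ∀ u v : UPos, u ≤ v → v ∈ J' → ∀ p, p ∈ ZZbelow u → p ∈ J → u ∈ J'
  tconv : ∀ n₁ n₂ n₃ : ℤ, n₁ ≤ n₂ → n₂ ≤ n₃ → zpt n₁ ∈ J → zpt n₃ ∈ J → zpt n₂ ∈ J

/- membership unfoldings -/
lemma mem_zzO {β δ : EReal} {p : ZZpt} :
    p ∈ zzO β δ ↔ (β ≤ pJ p ∧ β < pI p) ∧ (pI p ≤ δ ∧ pJ p < δ) := by
  rw [zzO, Set.mem_setOf_eq, zzLtLo_iff, zzLtHi_iff]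

lemma mem_zzCO {β δ : EReal} {p : ZZpt} :
    p ∈ zzCO β δ ↔ β ≤ pJ p ∧ (pI p ≤ δ ∧ pJ p < δ) := by
  rw [zzCO, Set.mem_setOf_eq, zzLeLo_iff, zzLtHi_iff]

lemma mem_zzOC {β δ : EReal} {p : ZZpt} :
    p ∈ zzOC β δ ↔ (β ≤ pJ p ∧ β < pI p) ∧ pI p ≤ δ := by
  rw [zzOC, Set.mem_setOf_eq, zzLtLo_iff, zzLeHi_iff]

lemma mem_zzCC {β δ : EReal} {p : ZZpt} :
    p ∈ zzCC β δ ↔ β ≤ pJ p ∧ pI p ≤ δ := by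
  rw [zzCC, Set.mem_setOf_eq, zzLeLo_iff, zzLeHi_iff]

lemma ebi_le_pJ {b : ℤ} {p : ZZpt} : ebi b ≤ pJ p ↔ b ≤ p.j := by
  rw [ebi, pJ]; exact_mod_cast Iff.rfl

lemma ebi_lt_pI {b : ℤ} {p : ZZpt} : ebi b < pI p ↔ b < p.i := by
  rw [ebi, pI]; exact_mod_cast Iff.rfl

lemma pI_le_ebi {d : ℤ} {p : ZZpt} : pI p ≤ ebi d ↔ p.i ≤ d := by
  rw [ebi, pI]; exact_mod_cast Iff.rfl

lemma pJ_lt_ebi {d : ℤ} {p : ZZpt} : pJ p < ebi d ↔ p.j < d := by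
  rw [ebi, pJ]; exact_mod_cast Iff.rfl

lemma ebi_le_coe {b : ℤ} {y : ℝ} : ebi b ≤ (y : EReal) ↔ (b : ℝ) ≤ y := by
  rw [ebi]; exact_mod_cast Iff.rfl

lemma ebi_lt_coe {b : ℤ} {y : ℝ} : ebi b < (y : EReal) ↔ (b : ℝ) < y := by
  rw [ebi]; exact_mod_cast Iff.rfl

lemma coe_le_ebi {b : ℤ} {y : ℝ} : (y : EReal) ≤ ebi b ↔ y ≤ (b : ℝ) := by
  rw [ebi]; exact_mod_cast Iff.rfl

lemma coe_lt_ebi {b : ℤ} {y : ℝ} : (y : EReal) < ebi b ↔ y < (b : ℝ) := by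
  rw [ebi]; exact_mod_cast Iff.rfl

/-- key point construction -/
lemma exists_zz_point (x y : ℝ) (hxy : x ≤ y) (b : ℤ) (hb : (b : ℝ) ≤ y) :
    ∃ p : ZZpt, x ≤ (p.i : ℝ) ∧ (p.j : ℝ) ≤ y ∧ b ≤ p.j ∧ p.i = max ⌈x⌉ b := by
  set i0 : ℤ := max ⌈x⌉ b with hi0
  have hx_le : x ≤ (i0 : ℝ) :=
    le_trans (Int.le_ceil x) (by exact_mod_cast le_max_left ⌈x⌉ b)
  by_cases h : (i0 : ℝ) ≤ y
  · exact ⟨⟨i0, i0, Or.inl rfl⟩, hx_le, h, le_max_right _ _, rfl⟩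
  · push_neg at h
    have hbi : (b : ℝ) < i0 := lt_of_le_of_lt hb h
    have hbi' : b < i0 := by exact_mod_cast hbi
    have hmax : i0 = ⌈x⌉ := by omega
    have hy : ((i0 - 1 : ℤ) : ℝ) ≤ y := by
      have := Int.ceil_lt_add_one x
      rw [hmax]; push_cast; linarith
    exact ⟨⟨i0, i0 - 1, Or.inr rfl⟩, hx_le, hy, by show b ≤ i0 - 1; omega, rfl⟩
def zcc (e : ℤ) : ZZpt := ⟨e, e, Or.inl rfl⟩
def zco (e : ℤ) : ZZpt := ⟨e, e - 1, Or.inr rfl⟩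
@[simp] lemma zcc_i (e : ℤ) : (zcc e).i = e := rfl
@[simp] lemma zcc_j (e : ℤ) : (zcc e).j = e := rfl
@[simp] lemma zco_i (e : ℤ) : (zco e).i = e := rfl
@[simp] lemma zco_j (e : ℤ) : (zco e).j = e - 1 := rfl

lemma coe_mono_EReal {s t : ℝ} (h : s ≤ t) : (s : EReal) ≤ (t : EReal) :=
  EReal.coe_le_coe_iff.mpr h

lemma pJ_le_coe {p : ZZpt} {y : ℝ} (h : (p.j : ℝ) ≤ y) : pJ p ≤ (y : EReal) :=
  coe_mono_EReal h

lemma coe_le_pI {p : ZZpt} {x : ℝ} (h : x ≤ (p.i : ℝ)) : (x : EReal) ≤ pI p :=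
  coe_mono_EReal h

lemma goodPair_cc (b d : ℤ) (hbd : b ≤ d) :
    GoodPair (zzCC (ebi b) (ebi d)) (ublkCC (ebi b) (ebi d)) := by
  have memJ : ∀ p : ZZpt, p ∈ zzCC (ebi b) (ebi d) ↔ b ≤ p.j ∧ p.i ≤ d := fun p => by
    rw [mem_zzCC, ebi_le_pJ, pI_le_ebi]
  have memJ' : ∀ u : UPos, u ∈ ublkCC (ebi b) (ebi d) ↔ u.1.x ≤ (d : ℝ) ∧ (b : ℝ) ≤ u.1.y :=
    fun u => by
      show ((u.1.x : EReal) ≤ ebi d ∧ ebi b ≤ (u.1.y : EReal)) ↔ _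
      rw [coe_le_ebi, ebi_le_coe]
  constructor
  · intro u hu
    rw [memJ'] at hu
    obtain ⟨p, h1, h2, h3, h4⟩ := exists_zz_point u.1.x u.1.y u.2 b hu.2
    have hceil : ⌈u.1.x⌉ ≤ d := Int.ceil_le.mpr hu.1
    exact ⟨p, ⟨h1, h2⟩, (memJ p).2 ⟨h3, by omega⟩⟩
  · intro u hu p q hp hq hpq hpJ
    rw [memJ] at hpJ ⊢
    exact ⟨le_trans hpJ.1 hpq.2, le_trans hpq.1 hpJ.2⟩
  · intro u hu p hp hpJ
    exfalso
    rw [memJ'] at hu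
    rw [memJ] at hpJ
    rcases not_and_or.mp hu with h | h <;> push_neg at h
    · have h1 : u.1.x ≤ (p.i : ℝ) := hp.1
      have h2 : (p.i : ℝ) ≤ (d : ℝ) := by exact_mod_cast hpJ.2
      linarith
    · have h1 : (p.j : ℝ) ≤ u.1.y := hp.2
      have h2 : (b : ℝ) ≤ (p.j : ℝ) := by exact_mod_cast hpJ.1
      linarith
  · intro u v huv hv p hp hpJ
    rw [memJ'] at hv ⊢
    rw [memJ] at hpJ
    exact ⟨le_trans hp.1 (by exact_mod_cast hpJ.2), le_trans (by exact_mod_cast hpJ.1) hp.2⟩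
  · intro n1 n2 n3 h12 h23 h1 h3
    rw [memJ] at h1 h3 ⊢
    exact ⟨le_trans h1.1 (zpt_j_mono h12), le_trans (zpt_i_mono h23) h3.2⟩

lemma goodPair_co (b : ℤ) (δ : EReal) (hδ : IsIntOrTop δ) (hbδ : ebi b < δ) :
    GoodPair (zzCO (ebi b) δ) (ublkCO (ebi b) δ) := by
  have memJ : ∀ p : ZZpt, p ∈ zzCO (ebi b) δ ↔ b ≤ p.j ∧ (pI p ≤ δ ∧ pJ p < δ) := fun p => by
    rw [mem_zzCO, ebi_le_pJ]
  have memJ' : ∀ u : UPos, u ∈ ublkCO (ebi b) δ ↔ (b : ℝ) ≤ u.1.y ∧ (u.1.y : EReal) < δ :=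
    fun u => by
      show (ebi b ≤ (u.1.y : EReal) ∧ (u.1.y : EReal) < δ) ↔ _
      rw [ebi_le_coe]
  constructor
  · intro u hu
    rw [memJ'] at hu
    obtain ⟨p, h1, h2, h3, h4⟩ := exists_zz_point u.1.x u.1.y u.2 b hu.1
    refine ⟨p, ⟨h1, h2⟩, (memJ p).2 ⟨h3, ?_, lt_of_le_of_lt (pJ_le_coe h2) hu.2⟩⟩
    rcases hδ with rfl | ⟨e, rfl⟩
    · exact le_top
    · rw [pI_le_ebi]
      have hye : u.1.y < (e : ℝ) := coe_lt_ebi.mp hu.2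
      have hce : ⌈u.1.x⌉ ≤ e := Int.ceil_le.mpr (by linarith [u.2])
      have hbe : (b : ℝ) < (e : ℝ) := by linarith [hu.1]
      have hbe' : b ≤ e := by exact_mod_cast le_of_lt hbe
      omega
  · intro u hu p q hp hq hpq hpJ
    rw [memJ'] at hu
    rw [memJ] at hpJ ⊢
    exact ⟨le_trans hpJ.1 hpq.2, le_trans (pI_mono hpq.1) hpJ.2.1,
      lt_of_le_of_lt (pJ_le_coe hq.2) hu.2⟩
  · intro u hu p hp hpJ
    rw [memJ'] at hu
    rw [memJ] at hpJ
    rcases not_and_or.mp hu with h | h <;> push_neg at h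
    · exfalso
      have h2 : (b : ℝ) ≤ (p.j : ℝ) := by exact_mod_cast hpJ.1
      linarith [hp.2]
    · rcases hδ with rfl | ⟨e, rfl⟩
      · exact absurd (EReal.coe_lt_top u.1.y) (not_lt.mpr h)
      · have hey : (e : ℝ) ≤ u.1.y := ebi_le_coe.mp h
        have hbe : b < e := by
          have := ebi_lt_coe.mp (lt_of_lt_of_le hbδ (coe_le_ebi.mpr (le_refl (e : ℝ))))
          exact_mod_cast this
        have hpie : p.i ≤ e := pI_le_ebi.mp hpJ.2.1
        have hxe : u.1.x ≤ (e : ℝ) := le_trans hp.1 (by exact_mod_cast hpie)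
        refine ⟨zco e, zcc e, ⟨by show _ ≤ ((zco e).i:ℝ); simp only [zco_i]; exact hxe, by show ((zco e).j:ℝ) ≤ _; simp only [zco_j]; push_cast; linarith⟩,
          (memJ _).2 ⟨by simp only [zco_j]; omega, pI_le_ebi.mpr (by simp only [zco_i]; omega), pJ_lt_ebi.mpr (by simp only [zco_j]; omega)⟩,
          ⟨by show _ ≤ ((zcc e).i:ℝ); simp only [zcc_i]; exact hxe, by show ((zcc e).j:ℝ) ≤ _; simp only [zcc_j]; exact hey⟩, ?_, by refine ⟨?_, ?_⟩ <;> simp only [zcc_i, zcc_j, zco_i, zco_j] <;> omega⟩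
        intro hmem
        rw [memJ] at hmem
        exact absurd (pJ_lt_ebi.mp hmem.2.2) (by simp only [zcc_j]; omega)
  · intro u v huv hv p hp hpJ
    rw [memJ'] at hv ⊢
    rw [memJ] at hpJ
    refine ⟨le_trans (by exact_mod_cast hpJ.1) hp.2, lt_of_le_of_lt (coe_mono_EReal huv.2) hv.2⟩
  · intro n1 n2 n3 h12 h23 h1 h3
    rw [memJ] at h1 h3 ⊢
    exact ⟨le_trans h1.1 (zpt_j_mono h12), le_trans (pI_mono (zpt_i_mono h23)) h3.2.1,
      lt_of_le_of_lt (pJ_mono (zpt_j_mono h23)) h3.2.2⟩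

lemma goodPair_oc (β : EReal) (d : ℤ) (hβ : IsIntOrBot β) (hβd : β < ebi d) :
    GoodPair (zzOC β (ebi d)) (ublkOC β (ebi d)) := by
  have memJ : ∀ p : ZZpt, p ∈ zzOC β (ebi d) ↔ (β ≤ pJ p ∧ β < pI p) ∧ p.i ≤ d := fun p => by
    rw [mem_zzOC, pI_le_ebi]
  have memJ' : ∀ u : UPos, u ∈ ublkOC β (ebi d) ↔ β < (u.1.x : EReal) ∧ u.1.x ≤ (d : ℝ) :=
    fun u => by
      show (β < (u.1.x : EReal) ∧ (u.1.x : EReal) ≤ ebi d) ↔ _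
      rw [coe_le_ebi]
  constructor
  · intro u hu
    rw [memJ'] at hu
    have hceil : ⌈u.1.x⌉ ≤ d := Int.ceil_le.mpr hu.2
    rcases hβ with rfl | ⟨c, rfl⟩
    · obtain ⟨p, h1, h2, h3, h4⟩ := exists_zz_point u.1.x u.1.y u.2 (⌈u.1.x⌉ - 1)
        (by push_cast; linarith [Int.ceil_lt_add_one u.1.x, u.2])
      exact ⟨p, ⟨h1, h2⟩, (memJ p).2 ⟨⟨bot_le, by rw [pI]; exact EReal.bot_lt_coe _⟩, by omega⟩⟩
    · have hcx : (c : ℝ) < u.1.x := ebi_lt_coe.mp hu.1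
      obtain ⟨p, h1, h2, h3, h4⟩ := exists_zz_point u.1.x u.1.y u.2 c (by linarith [u.2])
      have hcceil : c < ⌈u.1.x⌉ := by
        have : (c : ℝ) < (⌈u.1.x⌉ : ℝ) := lt_of_lt_of_le hcx (Int.le_ceil _)
        exact_mod_cast this
      exact ⟨p, ⟨h1, h2⟩, (memJ p).2 ⟨⟨ebi_le_pJ.mpr h3, ebi_lt_pI.mpr (by omega)⟩, by omega⟩⟩
  · intro u hu p q hp hq hpq hpJ
    rw [memJ'] at hu
    rw [memJ] at hpJ ⊢
    exact ⟨⟨le_trans hpJ.1.1 (pJ_mono hpq.2), lt_of_lt_of_le hu.1 (coe_le_pI hq.1)⟩,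
      le_trans hpq.1 hpJ.2⟩
  · intro u hu p hp hpJ
    rw [memJ'] at hu
    rw [memJ] at hpJ
    rcases not_and_or.mp hu with h | h <;> push_neg at h
    · rcases hβ with rfl | ⟨c, rfl⟩
      · exact absurd h (not_le.mpr (EReal.bot_lt_coe u.1.x))
      · have hxc : u.1.x ≤ (c : ℝ) := coe_le_ebi.mp h
        have hcy : (c : ℝ) ≤ u.1.y := by
          have h2 : (c : ℝ) ≤ (p.j : ℝ) := by exact_mod_cast ebi_le_pJ.mp hpJ.1.1
          linarith [hp.2]
        have hcd : c < d := by
          have h3 := hβd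
          rw [ebi, ebi] at h3
          exact_mod_cast h3
        refine ⟨zco (c + 1), zcc c, ⟨by show _ ≤ ((zco (c+1)).i:ℝ); simp only [zco_i]; push_cast; linarith, by show ((zco (c+1)).j:ℝ) ≤ _; simp only [zco_j]; push_cast; linarith⟩,
          (memJ _).2 ⟨⟨ebi_le_pJ.mpr (by simp only [zco_j]; omega), ebi_lt_pI.mpr (by simp only [zco_i]; omega)⟩, by simp only [zco_i]; omega⟩,
          ⟨by show _ ≤ ((zcc c).i:ℝ); simp only [zcc_i]; exact hxc, by show ((zcc c).j:ℝ) ≤ _; simp only [zcc_j]; exact hcy⟩, ?_, by refine ⟨?_, ?_⟩ <;> simp only [zcc_i, zcc_j, zco_i, zco_j] <;> omega⟩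
        intro hmem
        rw [memJ] at hmem
        exact absurd (ebi_lt_pI.mp hmem.1.2) (by simp only [zcc_i]; omega)
    · exfalso
      have h2 : (p.i : ℝ) ≤ (d : ℝ) := by exact_mod_cast hpJ.2
      linarith [hp.1]
  · intro u v huv hv p hp hpJ
    rw [memJ'] at hv ⊢
    rw [memJ] at hpJ
    exact ⟨lt_of_lt_of_le hv.1 (coe_mono_EReal huv.1),
      le_trans hp.1 (by exact_mod_cast hpJ.2)⟩
  · intro n1 n2 n3 h12 h23 h1 h3
    rw [memJ] at h1 h3 ⊢
    exact ⟨⟨le_trans h1.1.1 (pJ_mono (zpt_j_mono h12)),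
      lt_of_lt_of_le h1.1.2 (pI_mono (zpt_i_mono h12))⟩,
      le_trans (zpt_i_mono h23) h3.2⟩

lemma goodPair_o (β δ : EReal) (hβ : IsIntOrBot β) (hδ : IsIntOrTop δ) (hβδ : β < δ) :
    GoodPair (zzO β δ) (ublkO β δ) := by
  have memJ : ∀ p : ZZpt, p ∈ zzO β δ ↔ (β ≤ pJ p ∧ β < pI p) ∧ (pI p ≤ δ ∧ pJ p < δ) :=
    fun p => mem_zzO
  have memJ' : ∀ u : UPos, u ∈ ublkO β δ ↔ β < (u.1.x : EReal) ∧ (u.1.y : EReal) < δ :=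
    fun u => Iff.rfl
  have hiOK : ∀ (u : UPos), (u.1.y : EReal) < δ → ∀ n : ℤ, (n : ℝ) ≤ u.1.y → ebi n < δ :=
    fun u hu n hn => lt_of_le_of_lt (by rw [ebi]; exact coe_mono_EReal hn) hu
  have hiOK2 : ∀ (u : UPos), (u.1.y : EReal) < δ → ∀ n : ℤ, (n : ℝ) ≤ u.1.y →
      (∀ m : ℤ, m ≤ n → ebi m ≤ δ) := by
    intro u hu n hn m hm
    refine le_of_lt (lt_of_le_of_lt ?_ (hiOK u hu n hn))
    rw [ebi, ebi]
    exact coe_mono_EReal (by exact_mod_cast hm)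
  constructor
  · intro u hu
    rw [memJ'] at hu
    rcases hβ with rfl | ⟨c, rfl⟩
    · obtain ⟨p, h1, h2, h3, h4⟩ := exists_zz_point u.1.x u.1.y u.2 (⌈u.1.x⌉ - 1)
        (by push_cast; linarith [Int.ceil_lt_add_one u.1.x, u.2])
      refine ⟨p, ⟨h1, h2⟩, (memJ p).2 ⟨⟨bot_le, by rw [pI]; exact EReal.bot_lt_coe _⟩, ?_, ?_⟩⟩
      · rcases hδ with rfl | ⟨e, rfl⟩
        · exact le_top
        · rw [pI_le_ebi]
          have hye : u.1.y < (e : ℝ) := coe_lt_ebi.mp hu.2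
          have hce : ⌈u.1.x⌉ ≤ e := Int.ceil_le.mpr (by linarith [u.2])
          omega
      · exact lt_of_le_of_lt (pJ_le_coe h2) hu.2
    · have hcx : (c : ℝ) < u.1.x := ebi_lt_coe.mp hu.1
      obtain ⟨p, h1, h2, h3, h4⟩ := exists_zz_point u.1.x u.1.y u.2 c (by linarith [u.2])
      have hcceil : c < ⌈u.1.x⌉ := by
        have : (c : ℝ) < (⌈u.1.x⌉ : ℝ) := lt_of_lt_of_le hcx (Int.le_ceil _)
        exact_mod_cast this
      refine ⟨p, ⟨h1, h2⟩, (memJ p).2 ⟨⟨ebi_le_pJ.mpr h3, ebi_lt_pI.mpr (by omega)⟩, ?_,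
        lt_of_le_of_lt (pJ_le_coe h2) hu.2⟩⟩
      rcases hδ with rfl | ⟨e, rfl⟩
      · exact le_top
      · rw [pI_le_ebi]
        have hye : u.1.y < (e : ℝ) := coe_lt_ebi.mp hu.2
        have hce : ⌈u.1.x⌉ ≤ e := Int.ceil_le.mpr (by linarith [u.2])
        have hcy : (c : ℝ) < (e : ℝ) := by linarith [u.2]
        have hce' : c ≤ e := by exact_mod_cast le_of_lt hcy
        omega
  · intro u hu p q hp hq hpq hpJ
    rw [memJ'] at hu
    rw [memJ] at hpJ ⊢
    exact ⟨⟨le_trans hpJ.1.1 (pJ_mono hpq.2), lt_of_lt_of_le hu.1 (coe_le_pI hq.1)⟩,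
      le_trans (pI_mono hpq.1) hpJ.2.1, lt_of_le_of_lt (pJ_le_coe hq.2) hu.2⟩
  · intro u hu p hp hpJ
    rw [memJ'] at hu
    rw [memJ] at hpJ
    rcases not_and_or.mp hu with h | h <;> push_neg at h
    · rcases hβ with rfl | ⟨c, rfl⟩
      · exact absurd h (not_le.mpr (EReal.bot_lt_coe u.1.x))
      · have hxc : u.1.x ≤ (c : ℝ) := coe_le_ebi.mp h
        have hcy : (c : ℝ) ≤ u.1.y := by
          have h2 : (c : ℝ) ≤ (p.j : ℝ) := by exact_mod_cast ebi_le_pJ.mp hpJ.1.1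
          linarith [hp.2]
        have hcpi : c < p.i := ebi_lt_pI.mp hpJ.1.2
        refine ⟨zco (c + 1), zcc c, ⟨by show _ ≤ ((zco (c+1)).i:ℝ); simp only [zco_i]; push_cast; linarith, by show ((zco (c+1)).j:ℝ) ≤ _; simp only [zco_j]; push_cast; linarith⟩,
          (memJ _).2 ⟨⟨ebi_le_pJ.mpr (by simp only [zco_j]; omega), ebi_lt_pI.mpr (by simp only [zco_i]; omega)⟩, ?_, ?_⟩,
          ⟨by show _ ≤ ((zcc c).i:ℝ); simp only [zcc_i]; exact hxc, by show ((zcc c).j:ℝ) ≤ _; simp only [zcc_j]; exact hcy⟩, ?_, by refine ⟨?_, ?_⟩ <;> simp only [zcc_i, zcc_j, zco_i, zco_j] <;> omega⟩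
        · show pI _ ≤ δ
          refine le_trans ?_ hpJ.2.1
          rw [pI, pI]
          exact coe_mono_EReal (by exact_mod_cast (show (zco (c + 1)).i ≤ p.i by simp only [zco_i]; omega))
        · show pJ _ < δ
          refine lt_of_le_of_lt (le_trans ?_ hpJ.1.1) hpJ.2.2
          rw [pJ, ebi]
          exact coe_mono_EReal (by exact_mod_cast (show (zco (c + 1)).j ≤ c by simp only [zco_j]; omega))
        · intro hmem
          rw [memJ] at hmem
          exact absurd (ebi_lt_pI.mp hmem.1.2) (by simp only [zcc_i]; omega)
    · rcases hδ with rfl | ⟨e, rfl⟩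
      · exact absurd (EReal.coe_lt_top u.1.y) (not_lt.mpr h)
      · have hey : (e : ℝ) ≤ u.1.y := ebi_le_coe.mp h
        have hpie : p.i ≤ e := pI_le_ebi.mp hpJ.2.1
        have hpje : p.j < e := pJ_lt_ebi.mp hpJ.2.2
        have hxe : u.1.x ≤ (e : ℝ) := le_trans hp.1 (by exact_mod_cast hpie)
        refine ⟨zco e, zcc e, ⟨by show _ ≤ ((zco e).i:ℝ); simp only [zco_i]; exact hxe, by show ((zco e).j:ℝ) ≤ _; simp only [zco_j]; push_cast; linarith⟩,
          (memJ _).2 ⟨⟨?_, ?_⟩, pI_le_ebi.mpr (by simp only [zco_i]; omega), pJ_lt_ebi.mpr (by simp only [zco_j]; omega)⟩,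
          ⟨by show _ ≤ ((zcc e).i:ℝ); simp only [zcc_i]; exact hxe, by show ((zcc e).j:ℝ) ≤ _; simp only [zcc_j]; exact hey⟩, ?_, by refine ⟨?_, ?_⟩ <;> simp only [zcc_i, zcc_j, zco_i, zco_j] <;> omega⟩
        · show β ≤ pJ _
          refine le_trans hpJ.1.1 ?_
          rw [pJ, pJ]
          exact coe_mono_EReal (by exact_mod_cast (show p.j ≤ (zco e).j by simp only [zco_j]; omega))
        · show β < pI _
          exact lt_of_le_of_lt hpJ.1.1 hpJ.2.2
        · intro hmem
          rw [memJ] at hmem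
          exact absurd (pJ_lt_ebi.mp hmem.2.2) (by simp only [zcc_j]; omega)
  · intro u v huv hv p hp hpJ
    rw [memJ'] at hv ⊢
    exact ⟨lt_of_lt_of_le hv.1 (coe_mono_EReal huv.1),
      lt_of_le_of_lt (coe_mono_EReal huv.2) hv.2⟩
  · intro n1 n2 n3 h12 h23 h1 h3
    rw [memJ] at h1 h3 ⊢
    exact ⟨⟨le_trans h1.1.1 (pJ_mono (zpt_j_mono h12)),
      lt_of_lt_of_le h1.1.2 (pI_mono (zpt_i_mono h12))⟩,
      le_trans (pI_mono (zpt_i_mono h23)) h3.2.1,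
      lt_of_le_of_lt (pJ_mono (zpt_j_mono h23)) h3.2.2⟩
/-! ### The colimit computation -/

section ColimitComputation

variable {K : Type} [Field K]

open Classical in
/-- A comparison map between one-dimensional coefficient spaces. -/
noncomputable def cvMap (K : Type) [Field K] (P Q : Prop) :
    (PLift P → K) →ₗ[K] (PLift Q → K) where
  toFun v _ := if h : P then v ⟨h⟩ else 0
  map_add' u v := by
    funext hc
    by_cases h : P <;> simp [h]
  map_smul' r v := by
    funext hc
    by_cases h : P <;> simp [h]

open Classical in
lemma cvMap_apply (P Q : Prop) (v : PLift P → K) (hc : PLift Q) :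
    cvMap K P Q v hc = if h : P then v ⟨h⟩ else 0 := rfl

open Classical in
lemma ivMap_apply {P : Type} [Preorder P] (J : Set P) (a c : P) (v : PLift (a ∈ J) → K)
    (hc : PLift (c ∈ J)) : ivMap K J a c v hc = if h : a ∈ J then v ⟨h⟩ else 0 := rfl

variable (V : PersMod K ZZpt) {ι : Type} (Bz : ι → Set ZZpt) (Bu : ι → Set UPos)
variable (eqv : ∀ p : ZZpt, V.V p ≃ₗ[K] Π₀ i : ι, (PLift (p ∈ Bz i) → K))

attribute [local instance] Classical.decEq

/-- The forward comparison map on the direct sum. -/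
noncomputable def psi0 (u : UPos) :
    (⨁ p : ZZbelow u, V.V p.1) →ₗ[K] (Π₀ i : ι, PLift (u ∈ Bu i) → K) :=
  DirectSum.toModule K _ _ (fun p =>
    (DFinsupp.mapRange.linearMap (fun i => cvMap K (p.1 ∈ Bz i) (u ∈ Bu i))).comp
      (eqv p.1).toLinearMap)

set_option maxHeartbeats 1000000 in
lemma psi0_lof (u : UPos) (p : ↥(ZZbelow u)) (v : V.V p.1) :
    psi0 V Bz Bu eqv u (DirectSum.lof K (ZZbelow u) (fun r => V.V r.1) p v) =
      DFinsupp.mapRange.linearMap (fun i => cvMap K (p.1 ∈ Bz i) (u ∈ Bu i)) (eqv p.1 v) :=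
  DirectSum.toModule_lof
    (φ := fun q : ↥(ZZbelow u) =>
      (DFinsupp.mapRange.linearMap (fun i => cvMap K (q.1 ∈ Bz i) (u ∈ Bu i))).comp
        (eqv q.1).toLinearMap) K p v

/-- The basic elements of the colimit. -/
noncomputable def ecl (u : UPos) (p : ZZpt) (hp : p ∈ ZZbelow u) (i : ι) (c : K) :
    (EMod V).V u :=
  (relSub V (ZZbelow u)).mkQ
    (DirectSum.lof K (ZZbelow u) (fun r => V.V r.1) ⟨p, hp⟩
      ((eqv p).symm (DFinsupp.single i (fun _ => c))))

lemma ecl_congr (u : UPos) {p p' : ZZpt} (h : p = p') (hp : p ∈ ZZbelow u)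
    (hp' : p' ∈ ZZbelow u) (i : ι) (c : K) :
    ecl V Bz eqv u p hp i c = ecl V Bz eqv u p' hp' i c := by
  subst h; rfl

lemma ecl_zero (u : UPos) (p : ZZpt) (hp : p ∈ ZZbelow u) (i : ι) (c : K)
    (hpB : p ∉ Bz i) : ecl V Bz eqv u p hp i c = 0 := by
  have h0 : (fun _ => c : PLift (p ∈ Bz i) → K) = 0 :=
    funext fun h => absurd h.down hpB
  rw [ecl, h0, DFinsupp.single_zero, map_zero, map_zero, map_zero]
  rfl

lemma ecl_rel (u : UPos) (p q : ZZpt) (hp : p ∈ ZZbelow u) (hq : q ∈ ZZbelow u)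
    (hpq : p ≤ q) (i : ι) (c : K)
    (hnat : ∀ {p q : ZZpt} (h : p ≤ q) (m : V.V p),
      eqv q (V.map h m) =
        DFinsupp.mapRange.linearMap (fun i => ivMap K (Bz i) p q) (eqv p m)) :
    ecl V Bz eqv u p hp i c =
      (relSub V (ZZbelow u)).mkQ
        (DirectSum.lof K (ZZbelow u) (fun r => V.V r.1) ⟨q, hq⟩
          ((eqv q).symm (DFinsupp.single i (ivMap K (Bz i) p q (fun _ => c))))) := by
  rw [ecl]
  set v := (eqv p).symm (DFinsupp.single i (fun _ => c)) with hv
  have hmap : V.map hpq v = (eqv q).symm (DFinsupp.single i (ivMap K (Bz i) p q (fun _ => c))) := by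
    rw [LinearEquiv.eq_symm_apply, hnat hpq v, hv, LinearEquiv.apply_symm_apply,
      DFinsupp.mapRange.linearMap_apply, DFinsupp.mapRange_single]
  rw [← hmap]
  rw [Submodule.mkQ_apply, Submodule.mkQ_apply]
  refine (Submodule.Quotient.eq _).2 ?_
  exact Submodule.subset_span ⟨⟨p, hp⟩, ⟨q, hq⟩, hpq, v, rfl⟩

lemma ecl_step (u : UPos) (p q : ZZpt) (hp : p ∈ ZZbelow u) (hq : q ∈ ZZbelow u)
    (hpq : p ≤ q) (i : ι) (c : K) (hpB : p ∈ Bz i) (hqB : q ∈ Bz i)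
    (hnat : ∀ {p q : ZZpt} (h : p ≤ q) (m : V.V p),
      eqv q (V.map h m) =
        DFinsupp.mapRange.linearMap (fun i => ivMap K (Bz i) p q) (eqv p m)) :
    ecl V Bz eqv u p hp i c = ecl V Bz eqv u q hq i c := by
  rw [ecl_rel V Bz eqv u p q hp hq hpq i c hnat]
  have : ivMap K (Bz i) p q (fun _ => c) = (fun _ => c) := by
    funext hc
    rw [ivMap_apply, dif_pos hpB]
  rw [this]
  rfl

lemma ecl_kill (u : UPos) (p q : ZZpt) (hp : p ∈ ZZbelow u) (hq : q ∈ ZZbelow u)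
    (hpq : p ≤ q) (i : ι) (c : K) (hqB : q ∉ Bz i)
    (hnat : ∀ {p q : ZZpt} (h : p ≤ q) (m : V.V p),
      eqv q (V.map h m) =
        DFinsupp.mapRange.linearMap (fun i => ivMap K (Bz i) p q) (eqv p m)) :
    ecl V Bz eqv u p hp i c = 0 := by
  rw [ecl_rel V Bz eqv u p q hp hq hpq i c hnat]
  have : ivMap K (Bz i) p q (fun _ => c) = 0 := funext fun hc => absurd hc.down hqB
  rw [this, DFinsupp.single_zero, map_zero, map_zero, map_zero]
  rfl

end ColimitComputation
section MainConstruction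

variable {K : Type} [Field K]
variable (V : PersMod K ZZpt) {ι : Type} (Bz : ι → Set ZZpt) (Bu : ι → Set UPos)
variable (eqv : ∀ p : ZZpt, V.V p ≃ₗ[K] Π₀ i : ι, (PLift (p ∈ Bz i) → K))

attribute [local instance] Classical.decEq Classical.propDecidable

lemma ecl_chain
    (hnat : ∀ {p q : ZZpt} (h : p ≤ q) (m : V.V p),
      eqv q (V.map h m) =
        DFinsupp.mapRange.linearMap (fun i => ivMap K (Bz i) p q) (eqv p m))
    (good : ∀ i, GoodPair (Bz i) (Bu i)) (u : UPos) (i : ι) (c : K) :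
    ∀ (d : ℕ) (n : ℤ) (h1 : zpt n ∈ ZZbelow u) (_ : zpt n ∈ Bz i)
      (h2 : zpt (n + d) ∈ ZZbelow u) (_ : zpt (n + d) ∈ Bz i),
      ecl V Bz eqv u (zpt n) h1 i c = ecl V Bz eqv u (zpt (n + d)) h2 i c := by
  intro d
  induction d with
  | zero =>
    intro n h1 h1' h2 h2'
    exact ecl_congr V Bz eqv u (congrArg zpt (by push_cast; ring)) h1 h2 i c
  | succ d ih =>
    intro n h1 h1' h2 h2'
    have e2 : n + ((d + 1 : ℕ) : ℤ) = (n + 1) + (d : ℤ) := by push_cast; ring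
    have hmid : zpt (n + 1) ∈ ZZbelow u :=
      ZZbelow_tconv u (by omega) (by push_cast; omega) h1 h2
    have hmid' : zpt (n + 1) ∈ Bz i :=
      (good i).tconv n (n + 1) (n + ((d + 1 : ℕ) : ℤ)) (by omega) (by push_cast; omega) h1' h2'
    have h2a : zpt ((n + 1) + (d : ℤ)) ∈ ZZbelow u := by rw [← e2]; exact h2
    have h2a' : zpt ((n + 1) + (d : ℤ)) ∈ Bz i := by rw [← e2]; exact h2'
    have step : ecl V Bz eqv u (zpt n) h1 i c = ecl V Bz eqv u (zpt (n + 1)) hmid i c := by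
      rcases zpt_comparable n with h | h
      · exact ecl_step V Bz eqv u _ _ h1 hmid h i c h1' hmid' hnat
      · exact (ecl_step V Bz eqv u _ _ hmid h1 h i c hmid' h1' hnat).symm
    rw [step, ih (n + 1) hmid hmid' h2a h2a']
    exact ecl_congr V Bz eqv u (congrArg zpt e2.symm) h2a h2 i c

lemma ecl_connect_le
    (hnat : ∀ {p q : ZZpt} (h : p ≤ q) (m : V.V p),
      eqv q (V.map h m) =
        DFinsupp.mapRange.linearMap (fun i => ivMap K (Bz i) p q) (eqv p m))
    (good : ∀ i, GoodPair (Bz i) (Bu i)) (u : UPos) (i : ι) (c : K)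
    (p q : ZZpt) (hp : p ∈ ZZbelow u) (hq : q ∈ ZZbelow u)
    (hpB : p ∈ Bz i) (hqB : q ∈ Bz i) (hle : p.i + p.j ≤ q.i + q.j) :
    ecl V Bz eqv u p hp i c = ecl V Bz eqv u q hq i c := by
  have key : (p.i + p.j) + (((q.i + q.j) - (p.i + p.j)).toNat : ℤ) = q.i + q.j := by omega
  have hz1 : zpt (p.i + p.j) ∈ ZZbelow u := by rw [zpt_add]; exact hp
  have hz1' : zpt (p.i + p.j) ∈ Bz i := by rw [zpt_add]; exact hpB
  have hz2 : zpt ((p.i + p.j) + (((q.i + q.j) - (p.i + p.j)).toNat : ℤ)) ∈ ZZbelow u := by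
    rw [key, zpt_add]; exact hq
  have hz2' : zpt ((p.i + p.j) + (((q.i + q.j) - (p.i + p.j)).toNat : ℤ)) ∈ Bz i := by
    rw [key, zpt_add]; exact hqB
  calc ecl V Bz eqv u p hp i c
      = ecl V Bz eqv u (zpt (p.i + p.j)) hz1 i c :=
        ecl_congr V Bz eqv u (zpt_add p).symm hp hz1 i c
    _ = ecl V Bz eqv u (zpt ((p.i + p.j) + (((q.i + q.j) - (p.i + p.j)).toNat : ℤ))) hz2 i c :=
        ecl_chain V Bz Bu eqv hnat good u i c _ _ hz1 hz1' hz2 hz2'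
    _ = ecl V Bz eqv u q hq i c :=
        ecl_congr V Bz eqv u (by rw [key, zpt_add]) hz2 hq i c

lemma ecl_connect
    (hnat : ∀ {p q : ZZpt} (h : p ≤ q) (m : V.V p),
      eqv q (V.map h m) =
        DFinsupp.mapRange.linearMap (fun i => ivMap K (Bz i) p q) (eqv p m))
    (good : ∀ i, GoodPair (Bz i) (Bu i)) (u : UPos) (i : ι) (c : K)
    (p q : ZZpt) (hp : p ∈ ZZbelow u) (hq : q ∈ ZZbelow u)
    (hpB : p ∈ Bz i) (hqB : q ∈ Bz i) :
    ecl V Bz eqv u p hp i c = ecl V Bz eqv u q hq i c := by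
  rcases le_total (p.i + p.j) (q.i + q.j) with h | h
  · exact ecl_connect_le V Bz Bu eqv hnat good u i c p q hp hq hpB hqB h
  · exact (ecl_connect_le V Bz Bu eqv hnat good u i c q p hq hp hqB hpB h).symm

lemma ecl_dead
    (hnat : ∀ {p q : ZZpt} (h : p ≤ q) (m : V.V p),
      eqv q (V.map h m) =
        DFinsupp.mapRange.linearMap (fun i => ivMap K (Bz i) p q) (eqv p m))
    (good : ∀ i, GoodPair (Bz i) (Bu i)) (u : UPos) (i : ι) (c : K)
    (p : ZZpt) (hp : p ∈ ZZbelow u) (hpB : p ∈ Bz i) (hu : u ∉ Bu i) :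
    ecl V Bz eqv u p hp i c = 0 := by
  obtain ⟨r, r', hr, hrB, hr', hr'B, hrr'⟩ := (good i).l3 u hu p hp hpB
  rw [ecl_connect V Bz Bu eqv hnat good u i c p r hp hr hpB hrB]
  exact ecl_kill V Bz eqv u r r' hr hr' hrr' i c hr'B hnat

lemma psi0_ker
    (hnat : ∀ {p q : ZZpt} (h : p ≤ q) (m : V.V p),
      eqv q (V.map h m) =
        DFinsupp.mapRange.linearMap (fun i => ivMap K (Bz i) p q) (eqv p m))
    (good : ∀ i, GoodPair (Bz i) (Bu i)) (u : UPos) :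
    relSub V (ZZbelow u) ≤ LinearMap.ker (psi0 V Bz Bu eqv u) := by
  rw [relSub, Submodule.span_le]
  rintro x ⟨p, q, h, v, rfl⟩
  simp only [SetLike.mem_coe, LinearMap.mem_ker, map_sub, psi0_lof, sub_eq_zero]
  rw [hnat h v]
  refine DFunLike.ext _ _ fun i => funext fun hc => ?_
  simp only [DFinsupp.mapRange.linearMap_apply, DFinsupp.mapRange_apply, cvMap_apply,
    ivMap_apply]
  by_cases hpB : p.1 ∈ Bz i
  · have hqB : q.1 ∈ Bz i := (good i).l2 u hc.down p.1 q.1 p.2 q.2 h hpB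
    simp only [dif_pos hpB, dif_pos hqB]
  · simp [dif_neg hpB]

/-- The forward map on the colimit. -/
noncomputable def psiL
    (hnat : ∀ {p q : ZZpt} (h : p ≤ q) (m : V.V p),
      eqv q (V.map h m) =
        DFinsupp.mapRange.linearMap (fun i => ivMap K (Bz i) p q) (eqv p m))
    (good : ∀ i, GoodPair (Bz i) (Bu i)) (u : UPos) :
    (EMod V).V u →ₗ[K] (Π₀ i : ι, PLift (u ∈ Bu i) → K) :=
  Submodule.liftQ _ (psi0 V Bz Bu eqv u) (psi0_ker V Bz Bu eqv hnat good u)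

/-- `ecl` as a linear map in the scalar. -/
noncomputable def eclMap (u : UPos) (p : ZZpt) (hp : p ∈ ZZbelow u) (i : ι) :
    K →ₗ[K] (EMod V).V u :=
  (relSub V (ZZbelow u)).mkQ.comp
    ((DirectSum.lof K (ZZbelow u) (fun r => V.V r.1) ⟨p, hp⟩).comp
      ((eqv p).symm.toLinearMap.comp
        ((DFinsupp.lsingle i).comp (LinearMap.pi fun _ => LinearMap.id))))

lemma eclMap_apply (u : UPos) (p : ZZpt) (hp : p ∈ ZZbelow u) (i : ι) (c : K) :
    eclMap V Bz eqv u p hp i c = ecl V Bz eqv u p hp i c := rfl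

/-- The components of the inverse map. -/
noncomputable def phiC (good : ∀ i, GoodPair (Bz i) (Bu i)) (u : UPos) (i : ι) :
    (PLift (u ∈ Bu i) → K) →ₗ[K] (EMod V).V u :=
  if h : u ∈ Bu i then
    (eclMap V Bz eqv u ((good i).l1 u h).choose ((good i).l1 u h).choose_spec.1 i).comp
      (LinearMap.proj (⟨h⟩ : PLift (u ∈ Bu i)))
  else 0

/-- The inverse map on the colimit. -/
noncomputable def phiL (good : ∀ i, GoodPair (Bz i) (Bu i)) (u : UPos) :
    (Π₀ i : ι, PLift (u ∈ Bu i) → K) →ₗ[K] (EMod V).V u :=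
  DFinsupp.lsum ℕ (fun i => phiC V Bz Bu eqv good u i)

lemma psi_ecl
    (hnat : ∀ {p q : ZZpt} (h : p ≤ q) (m : V.V p),
      eqv q (V.map h m) =
        DFinsupp.mapRange.linearMap (fun i => ivMap K (Bz i) p q) (eqv p m))
    (good : ∀ i, GoodPair (Bz i) (Bu i)) (u : UPos) (p : ZZpt) (hp : p ∈ ZZbelow u)
    (i : ι) (c : K) :
    psiL V Bz Bu eqv hnat good u (ecl V Bz eqv u p hp i c) =
      DFinsupp.single i (cvMap K (p ∈ Bz i) (u ∈ Bu i) (fun _ => c)) := by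
  have h0 := LinearMap.congr_fun
    (Submodule.liftQ_mkQ (relSub V (ZZbelow u)) (psi0 V Bz Bu eqv u)
      (psi0_ker V Bz Bu eqv hnat good u))
    (DirectSum.lof K (ZZbelow u) (fun r => V.V r.1) ⟨p, hp⟩
      ((eqv p).symm (DFinsupp.single i fun _ => c)))
  simp only [LinearMap.coe_comp, Function.comp_apply] at h0
  refine h0.trans ?_
  refine (psi0_lof V Bz Bu eqv u ⟨p, hp⟩ _).trans ?_
  rw [LinearEquiv.apply_symm_apply, DFinsupp.mapRange.linearMap_apply,
    DFinsupp.mapRange_single]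

lemma psi_phi
    (hnat : ∀ {p q : ZZpt} (h : p ≤ q) (m : V.V p),
      eqv q (V.map h m) =
        DFinsupp.mapRange.linearMap (fun i => ivMap K (Bz i) p q) (eqv p m))
    (good : ∀ i, GoodPair (Bz i) (Bu i)) (u : UPos) :
    (psiL V Bz Bu eqv hnat good u).comp (phiL V Bz Bu eqv good u) = LinearMap.id := by
  refine DFinsupp.lhom_ext fun i w => ?_
  simp only [LinearMap.coe_comp, Function.comp_apply, LinearMap.id_coe, id_eq]
  rw [phiL, DFinsupp.lsum_single, phiC]
  split_ifs with h
  · simp only [LinearMap.coe_comp, Function.comp_apply, LinearMap.proj_apply]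
    refine (psi_ecl V Bz Bu eqv hnat good u _ ((good i).l1 u h).choose_spec.1 i
      (w ⟨h⟩)).trans ?_
    congr 1
    funext hc
    rw [cvMap_apply, dif_pos ((good i).l1 u h).choose_spec.2]
  · rw [LinearMap.zero_apply, map_zero]
    have hw : w = 0 := funext fun h' => absurd h'.down h
    rw [hw, DFinsupp.single_zero]

lemma phi_psi
    (hnat : ∀ {p q : ZZpt} (h : p ≤ q) (m : V.V p),
      eqv q (V.map h m) =
        DFinsupp.mapRange.linearMap (fun i => ivMap K (Bz i) p q) (eqv p m))
    (good : ∀ i, GoodPair (Bz i) (Bu i)) (u : UPos) :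
    (phiL V Bz Bu eqv good u).comp (psiL V Bz Bu eqv hnat good u) = LinearMap.id := by
  refine Submodule.linearMap_qext _ ?_
  refine DirectSum.linearMap_ext _ fun p => ?_
  refine LinearMap.ext fun v => ?_
  simp only [LinearMap.coe_comp, Function.comp_apply, Submodule.mkQ_apply, LinearMap.id_coe,
    id_eq]
  have keyL : (phiL V Bz Bu eqv good u).comp
      (DFinsupp.mapRange.linearMap fun i => cvMap K (p.1 ∈ Bz i) (u ∈ Bu i)) =
      ((relSub V (ZZbelow u)).mkQ.comp
        ((DirectSum.lof K (ZZbelow u) (fun r => V.V r.1) p).comp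
          (eqv p.1).symm.toLinearMap)) := by
    refine DFinsupp.lhom_ext fun i ω => ?_
    simp only [LinearMap.coe_comp, Function.comp_apply, DFinsupp.mapRange.linearMap_apply,
      DFinsupp.mapRange_single, LinearEquiv.coe_coe, Submodule.mkQ_apply]
    have hmk : Submodule.Quotient.mk (DirectSum.lof K (ZZbelow u) (fun r => V.V r.1) p
        ((eqv p.1).symm (DFinsupp.single i ω))) = ecl V Bz eqv u p.1 p.2 i
          (if hpB : p.1 ∈ Bz i then ω ⟨hpB⟩ else 0) := by
      by_cases hpB : p.1 ∈ Bz i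
      · rw [dif_pos hpB]
        have hω : ω = fun _ => ω ⟨hpB⟩ := funext fun h' => congrArg ω (Subsingleton.elim _ _)
        rw [ecl, Submodule.mkQ_apply, ← hω]
      · rw [dif_neg hpB]
        have hω : ω = fun _ => (0 : K) := funext fun h' => absurd h'.down hpB
        rw [ecl, Submodule.mkQ_apply, ← hω]
    refine Eq.trans ?_ hmk.symm
    rw [phiL, DFinsupp.lsum_single, phiC]
    by_cases hpB : p.1 ∈ Bz i
    · rw [dif_pos hpB]
      have hcv : cvMap K (p.1 ∈ Bz i) (u ∈ Bu i) ω = fun _ => ω ⟨hpB⟩ :=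
        funext fun hc => by rw [cvMap_apply, dif_pos hpB]
      split_ifs with h
      · simp only [LinearMap.coe_comp, Function.comp_apply, LinearMap.proj_apply]
        simp only [hcv]
        exact ecl_connect V Bz Bu eqv hnat good u i (ω ⟨hpB⟩) _ p.1
          ((good i).l1 u h).choose_spec.1 p.2 ((good i).l1 u h).choose_spec.2 hpB
      · rw [LinearMap.zero_apply]
        exact (ecl_dead V Bz Bu eqv hnat good u i (ω ⟨hpB⟩) p.1 p.2 hpB h).symm
    · rw [dif_neg hpB]
      have hcv : cvMap K (p.1 ∈ Bz i) (u ∈ Bu i) ω = 0 :=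
        funext fun hc => by rw [cvMap_apply, dif_neg hpB]; rfl
      rw [hcv, map_zero]
      exact (ecl_zero V Bz eqv u p.1 p.2 i 0 hpB).symm
  have h1 := LinearMap.congr_fun keyL (eqv p.1 v)
  have h2 := LinearMap.congr_fun
    (Submodule.liftQ_mkQ (relSub V (ZZbelow u)) (psi0 V Bz Bu eqv u)
      (psi0_ker V Bz Bu eqv hnat good u))
    (DirectSum.lof K (ZZbelow u) (fun r => V.V r.1) p v)
  simp only [LinearMap.coe_comp, Function.comp_apply] at h2
  have h3 := congrArg (phiL V Bz Bu eqv good u) (h2.trans (psi0_lof V Bz Bu eqv u p v))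
  have h4 := congrArg (fun z => (relSub V (ZZbelow u)).mkQ
    (DirectSum.lof K (ZZbelow u) (fun r => V.V r.1) p z))
    (LinearEquiv.symm_apply_apply (eqv p.1) v)
  exact h3.trans (h1.trans h4)

lemma EMod_map_mk (u v : UPos) (huv : u ≤ v) (x : ⨁ p : ZZbelow u, V.V p.1) :
    (EMod V).map huv (Submodule.Quotient.mk x) =
      Submodule.Quotient.mk (fwd V (ZZbelow_mono huv) x) := rfl

lemma psi_nat
    (hnat : ∀ {p q : ZZpt} (h : p ≤ q) (m : V.V p),
      eqv q (V.map h m) =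
        DFinsupp.mapRange.linearMap (fun i => ivMap K (Bz i) p q) (eqv p m))
    (good : ∀ i, GoodPair (Bz i) (Bu i)) (u v : UPos) (huv : u ≤ v) :
    (psiL V Bz Bu eqv hnat good v).comp ((EMod V).map huv) =
      (DFinsupp.mapRange.linearMap (fun i => ivMap K (Bu i) u v)).comp
        (psiL V Bz Bu eqv hnat good u) := by
  refine Submodule.linearMap_qext _ (DirectSum.linearMap_ext _ fun p => LinearMap.ext fun x => ?_)
  simp only [LinearMap.coe_comp, Function.comp_apply, Submodule.mkQ_apply]
  have e1 : (EMod V).map huv (Submodule.Quotient.mk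
      (DirectSum.lof K (ZZbelow u) (fun r => V.V r.1) p x)) =
      Submodule.Quotient.mk (DirectSum.lof K (ZZbelow v) (fun r => V.V r.1)
        ⟨p.1, ZZbelow_mono huv p.2⟩ x) :=
    (EMod_map_mk V u v huv _).trans (congrArg _ (fwd_lof V (ZZbelow_mono huv) p x))
  have e2 : psiL V Bz Bu eqv hnat good v (Submodule.Quotient.mk
      (DirectSum.lof K (ZZbelow v) (fun r => V.V r.1) ⟨p.1, ZZbelow_mono huv p.2⟩ x)) =
      DFinsupp.mapRange.linearMap (fun i => cvMap K (p.1 ∈ Bz i) (v ∈ Bu i)) (eqv p.1 x) := by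
    have h0 := LinearMap.congr_fun
      (Submodule.liftQ_mkQ (relSub V (ZZbelow v)) (psi0 V Bz Bu eqv v)
        (psi0_ker V Bz Bu eqv hnat good v))
      (DirectSum.lof K (ZZbelow v) (fun r => V.V r.1) ⟨p.1, ZZbelow_mono huv p.2⟩ x)
    simp only [LinearMap.coe_comp, Function.comp_apply] at h0
    exact h0.trans (psi0_lof V Bz Bu eqv v ⟨p.1, ZZbelow_mono huv p.2⟩ x)
  have e3 : psiL V Bz Bu eqv hnat good u (Submodule.Quotient.mk
      (DirectSum.lof K (ZZbelow u) (fun r => V.V r.1) p x)) =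
      DFinsupp.mapRange.linearMap (fun i => cvMap K (p.1 ∈ Bz i) (u ∈ Bu i)) (eqv p.1 x) := by
    have h0 := LinearMap.congr_fun
      (Submodule.liftQ_mkQ (relSub V (ZZbelow u)) (psi0 V Bz Bu eqv u)
        (psi0_ker V Bz Bu eqv hnat good u))
      (DirectSum.lof K (ZZbelow u) (fun r => V.V r.1) p x)
    simp only [LinearMap.coe_comp, Function.comp_apply] at h0
    exact h0.trans (psi0_lof V Bz Bu eqv u p x)
  refine ((congrArg _ e1).trans (e2.trans ?_)).trans
    (congrArg (DFinsupp.mapRange.linearMap fun i => ivMap K (Bu i) u v) e3).symm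
  refine DFunLike.ext _ _ fun i => funext fun hc => ?_
  simp only [DFinsupp.mapRange.linearMap_apply, DFinsupp.mapRange_apply, cvMap_apply,
    ivMap_apply]
  by_cases hpB : p.1 ∈ Bz i
  · have hu : u ∈ Bu i := (good i).l5 u v huv hc.down p.1 p.2 hpB
    simp only [dif_pos hpB, dif_pos hu]
  · simp [dif_neg hpB]

end MainConstruction
lemma ez_int_or_bot (β : WithBot (WithTop ℤ)) (h : ez β ≠ ⊤) : IsIntOrBot (ez β) := by
  cases β with
  | bot => exact Or.inl rfl
  | coe b =>
    cases b with
    | top => exact absurd rfl h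
    | coe n => exact Or.inr ⟨n, rfl⟩

lemma ez_int_or_top (δ : WithBot (WithTop ℤ)) (h : ez δ ≠ ⊥) : IsIntOrTop (ez δ) := by
  cases δ with
  | bot => exact absurd rfl h
  | coe b =>
    cases b with
    | top => exact Or.inl rfl
    | coe n => exact Or.inr ⟨n, rfl⟩

/-- For a pointwise finite dimensional, interval decomposable zigzag module `V`,
the block extension `E(V)` is block decomposable, and there is a bijective
matching between `B(V)` and `B(E(V))` matching each zigzag interval
`⟨b,d⟩_ZZ` to the block `⟨b,d⟩_BL` of the same endpoint type. -/
theorem block_extension_decomposition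
    (K : Type) [Field K] (V : PersMod K ZZpt) (hV : V.pfd)
    (DV : DecompOver IsZZInterval V) :
    ∃ (D' : DecompOver IsBlockU (EMod V)) (e : DV.ι ≃ D'.ι),
      ∀ i : DV.ι, ZZBlockCorresponds (DV.B i) (D'.B (e i)) := by
  classical
  have hch : ∀ i : DV.ι, ∃ J' : Set UPos,
      ZZBlockCorresponds (DV.B i) J' ∧ GoodPair (DV.B i) J' ∧ IsBlockU J' := by
    intro i
    rcases DV.mem i with ⟨β, δ, hlt, hJ⟩ | ⟨b, δ, hlt, hJ⟩ | ⟨β, d, hlt, hJ⟩ | ⟨b, d, hle, hJ⟩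
    · refine ⟨ublkO (ez β) (ez δ), Or.inl ⟨β, δ, hlt, hJ, rfl⟩, ?_, Or.inl ⟨_, _, rfl⟩⟩
      rw [hJ]
      exact goodPair_o _ _ (ez_int_or_bot β (ne_top_of_lt hlt))
        (ez_int_or_top δ (ne_bot_of_gt hlt)) hlt
    · refine ⟨ublkCO ((b : ℝ) : EReal) (ez δ), Or.inr (Or.inl ⟨b, δ, hlt, hJ, rfl⟩), ?_,
        Or.inr (Or.inl ⟨_, _, rfl⟩)⟩
      rw [hJ]
      exact goodPair_co b (ez δ) (ez_int_or_top δ (ne_bot_of_gt hlt)) hlt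
    · refine ⟨ublkOC (ez β) ((d : ℝ) : EReal), Or.inr (Or.inr (Or.inl ⟨β, d, hlt, hJ, rfl⟩)),
        ?_, Or.inr (Or.inr (Or.inl ⟨_, _, rfl⟩))⟩
      rw [hJ]
      exact goodPair_oc (ez β) d (ez_int_or_bot β (ne_top_of_lt hlt)) hlt
    · refine ⟨ublkCC ((b : ℝ) : EReal) ((d : ℝ) : EReal),
        Or.inr (Or.inr (Or.inr ⟨b, d, hle, hJ, rfl⟩)), ?_,
        Or.inr (Or.inr (Or.inr ⟨_, _, rfl⟩))⟩
      rw [hJ]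
      exact goodPair_cc b d hle
  choose B' hcorr hgood hblk using hch
  refine ⟨DecompOver.mk DV.ι B' hblk
      (fun u => LinearEquiv.ofLinear
        (psiL V DV.B B' DV.equiv DV.natural hgood u)
        (phiL V DV.B B' DV.equiv hgood u)
        (psi_phi V DV.B B' DV.equiv DV.natural hgood u)
        (phi_psi V DV.B B' DV.equiv DV.natural hgood u))
      ?_, Equiv.refl _, fun i => hcorr i⟩
  intro u v huv m
  have h0 := LinearMap.congr_fun
    (psi_nat V DV.B B' DV.equiv DV.natural hgood u v huv) m
  simp only [LinearMap.coe_comp, Function.comp_apply] at h0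
  simpa only [LinearEquiv.ofLinear_apply] using h0


end PersStab
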